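/- Let D be a non-increasing degree sequence and let A, A' ∈ M(D) be adjacency matrices such that A' is obtained from A by a symmetric positive switch at coordinates (i,j,k,l) with i<j, k<l. Then Z_2(A') ≥ Z_2(A), where Z_2 = sqrt(M_2/m), M_2 is the second Zagreb index and m the number of edges (m is invariant under switches). -/

import Mathlib

/-- The switching matrix `C_{i,j,k,l}` (square, real entries). -/
def switchMatrixR {n : ℕ} (i j k l : Fin n) : Matrix (Fin n) (Fin n) ℝ :=
  Matrix.single i k 1 + Matrix.single j l 1
    - Matrix.single i l 1 - Matrix.single j k 1

/-- The symmetric switching matrix. -/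
def symSwitchMatrixR {n : ℕ} (i j k l : Fin n) : Matrix (Fin n) (Fin n) ℝ :=
  switchMatrixR i j k l + (switchMatrixR i j k l).transpose

/-- Degree of vertex `u`. -/
def degR {n : ℕ} (A : Matrix (Fin n) (Fin n) ℝ) (u : Fin n) : ℝ := ∑ v, A u v

/-- Number of edges `m` (each edge counted once). -/
def edgeCount {n : ℕ} (A : Matrix (Fin n) (Fin n) ℝ) : ℝ :=
  ∑ u : Fin n, ∑ v : Fin n, if u < v then A u v else 0

/-- Second Zagreb index `M₂ = Σ_{edges uv} d_u d_v`. -/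
def zagreb2R {n : ℕ} (A : Matrix (Fin n) (Fin n) ℝ) : ℝ :=
  ∑ u : Fin n, ∑ v : Fin n, if u < v then A u v * degR A u * degR A v else 0

/-- `Z₂ = sqrt(M₂ / m)`. -/
noncomputable def Z2 {n : ℕ} (A : Matrix (Fin n) (Fin n) ℝ) : ℝ :=
  Real.sqrt (zagreb2R A / edgeCount A)

/-- Half-sum trick for a symmetric function with zero diagonal. -/
lemma halfsum_aux {n : ℕ} (f : Fin n → Fin n → ℝ) (hs : ∀ u v, f u v = f v u)
    (hd : ∀ u, f u u = 0) :
    ∑ u : Fin n, ∑ v : Fin n, (if u < v then f u v else 0)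
      = (∑ u : Fin n, ∑ v : Fin n, f u v) / 2 := by
  have key : ∀ u v : Fin n, f u v
      = (if u < v then f u v else 0) + (if v < u then f u v else 0) := by
    intro u v
    rcases lt_trichotomy u v with h | h | h
    · simp [h, not_lt.mpr h.le]
    · simp [h, hd]
    · simp [h, not_lt.mpr h.le]
  have h2 : ∑ u : Fin n, ∑ v : Fin n, (if v < u then f u v else 0)
      = ∑ u : Fin n, ∑ v : Fin n, (if u < v then f u v else 0) := by
    rw [Finset.sum_comm]
    exact Finset.sum_congr rfl fun u _ => Finset.sum_congr rfl fun v _ => by rw [hs]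
  have h3 : ∑ u : Fin n, ∑ v : Fin n, f u v
      = (∑ u : Fin n, ∑ v : Fin n, (if u < v then f u v else 0))
        + ∑ u : Fin n, ∑ v : Fin n, (if v < u then f u v else 0) := by
    rw [← Finset.sum_add_distrib]
    refine Finset.sum_congr rfl fun u _ => ?_
    rw [← Finset.sum_add_distrib]
    exact Finset.sum_congr rfl fun v _ => key u v
  rw [h2] at h3
  linarith

lemma degR_symSwitch {n : ℕ} (i j k l u : Fin n) :
    degR (symSwitchMatrixR i j k l) u = 0 := by
  simp only [degR, symSwitchMatrixR, switchMatrixR, Matrix.single, Matrix.add_apply,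
    Matrix.sub_apply, Matrix.transpose_apply, Matrix.of_apply, Finset.sum_add_distrib,
    Finset.sum_sub_distrib, ite_and]
  by_cases h1 : i = u <;> by_cases h2 : j = u <;> simp [h1, h2, Finset.sum_ite_eq]

lemma sum_symSwitch_weighted {n : ℕ} (d : Fin n → ℝ) (i j k l : Fin n) :
    ∑ u : Fin n, ∑ v : Fin n, symSwitchMatrixR i j k l u v * d u * d v
      = 2 * ((d i - d j) * (d k - d l)) := by
  simp only [symSwitchMatrixR, switchMatrixR, Matrix.single, Matrix.add_apply,
    Matrix.sub_apply, Matrix.transpose_apply, Matrix.of_apply, ite_and,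
    add_mul, sub_mul, ite_mul, zero_mul, one_mul,
    Finset.sum_add_distrib, Finset.sum_sub_distrib]
  simp [Finset.sum_ite_eq, mul_comm]
  ring

lemma symSwitch_diag {n : ℕ} {i j k l : Fin n}
    (hik : i ≠ k) (hil : i ≠ l) (hjk : j ≠ k) (hjl : j ≠ l) (u : Fin n) :
    symSwitchMatrixR i j k l u u = 0 := by
  simp only [symSwitchMatrixR, switchMatrixR, Matrix.single, Matrix.add_apply,
    Matrix.sub_apply, Matrix.transpose_apply, Matrix.of_apply, ite_and]
  by_cases h1 : i = u <;> by_cases h2 : j = u <;> by_cases h3 : k = u <;> by_cases h4 : l = u <;>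
    simp_all

lemma symSwitch_symm {n : ℕ} (i j k l u v : Fin n) :
    symSwitchMatrixR i j k l u v = symSwitchMatrixR i j k l v u := by
  simp only [symSwitchMatrixR, Matrix.add_apply, Matrix.transpose_apply]
  ring

/-- a symmetric positive switch (degrees sorted non-increasingly)
does not decrease `Z₂`. -/
theorem stmt16 {n : ℕ} (A A' : Matrix (Fin n) (Fin n) ℝ)
    (hbin : ∀ u v, A u v = 0 ∨ A u v = 1) (hsym : A.IsSymm) (hdiag : ∀ u, A u u = 0)
    (hmono : Antitone (degR A))
    (i j k l : Fin n) (hij : i < j) (hkl : k < l)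
    (hik : i ≠ k) (hil : i ≠ l) (hjk : j ≠ k) (hjl : j ≠ l)
    (h1 : A i l = 1) (h2 : A j k = 1) (h3 : A i k = 0) (h4 : A j l = 0)
    (hA' : A' = A + symSwitchMatrixR i j k l) :
    Z2 A ≤ Z2 A' := by
  have hsymA : ∀ u v, A u v = A v u := fun u v => (congrFun (congrFun hsym.symm u) v)
  set B := symSwitchMatrixR i j k l with hB
  -- degrees are preserved
  have hdeg : ∀ u, degR A' u = degR A u := by
    intro u
    rw [hA']
    have : degR (A + B) u = degR A u + degR B u := by
      simp [degR, Matrix.add_apply, Finset.sum_add_distrib]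
    rw [this, degR_symSwitch, add_zero]
  -- A' symmetry and zero diagonal
  have hsymA' : ∀ u v, A' u v = A' v u := by
    intro u v
    rw [hA']
    simp only [Matrix.add_apply]
    rw [hsymA u v, hB, symSwitch_symm]
  have hdiagA' : ∀ u, A' u u = 0 := by
    intro u
    rw [hA']
    simp [Matrix.add_apply, hdiag u, hB, symSwitch_diag hik hil hjk hjl u]
  -- edge counts are equal
  have hEA : edgeCount A = (∑ u : Fin n, ∑ v : Fin n, A u v) / 2 :=
    halfsum_aux _ hsymA hdiag
  have hEA' : edgeCount A' = (∑ u : Fin n, ∑ v : Fin n, A' u v) / 2 :=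
    halfsum_aux _ hsymA' hdiagA'
  have hsumB : ∑ u : Fin n, ∑ v : Fin n, B u v = 0 := by
    have : ∀ u, ∑ v, B u v = 0 := fun u => degR_symSwitch i j k l u
    simp [this]
  have hedge : edgeCount A' = edgeCount A := by
    rw [hEA, hEA', hA']
    have expand2 : ∑ u : Fin n, ∑ v : Fin n, (A + B) u v
        = (∑ u : Fin n, ∑ v : Fin n, A u v) + ∑ u : Fin n, ∑ v : Fin n, B u v := by
      rw [← Finset.sum_add_distrib]
      refine Finset.sum_congr rfl fun u _ => ?_
      rw [← Finset.sum_add_distrib]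
      exact Finset.sum_congr rfl fun v _ => by simp [Matrix.add_apply]
    rw [expand2, hsumB]; ring
  -- Zagreb indices
  have hZA : zagreb2R A = (∑ u : Fin n, ∑ v : Fin n, A u v * degR A u * degR A v) / 2 := by
    refine halfsum_aux _ (fun u v => ?_) (fun u => by simp [hdiag u])
    rw [hsymA u v]; ring
  have hZA' : zagreb2R A' = (∑ u : Fin n, ∑ v : Fin n, A' u v * degR A u * degR A v) / 2 := by
    have : zagreb2R A' = ∑ u : Fin n, ∑ v : Fin n,
        if u < v then A' u v * degR A u * degR A v else 0 := by
      unfold zagreb2R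
      exact Finset.sum_congr rfl fun u _ => Finset.sum_congr rfl fun v _ => by
        rw [hdeg u, hdeg v]
    rw [this]
    refine halfsum_aux _ (fun u v => ?_) (fun u => by simp [hdiagA' u])
    rw [hsymA' u v]; ring
  have hZdiff : zagreb2R A' - zagreb2R A = (degR A i - degR A j) * (degR A k - degR A l) := by
    rw [hZA, hZA', hA']
    have expand : ∑ u : Fin n, ∑ v : Fin n, (A + B) u v * degR A u * degR A v
        = (∑ u : Fin n, ∑ v : Fin n, A u v * degR A u * degR A v)
          + ∑ u : Fin n, ∑ v : Fin n, B u v * degR A u * degR A v := by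
      rw [← Finset.sum_add_distrib]
      refine Finset.sum_congr rfl fun u _ => ?_
      rw [← Finset.sum_add_distrib]
      exact Finset.sum_congr rfl fun v _ => by simp [Matrix.add_apply]; ring
    rw [expand, hB, sum_symSwitch_weighted]
    ring
  -- positivity of edge count
  have hAnn : ∀ u v, 0 ≤ A u v := by
    intro u v; rcases hbin u v with h | h <;> rw [h] <;> norm_num
  have hpos : 0 < edgeCount A := by
    rw [hEA]
    have : (0:ℝ) < ∑ u : Fin n, ∑ v : Fin n, A u v := by
      refine Finset.sum_pos' (fun u _ => Finset.sum_nonneg fun v _ => hAnn u v) ⟨i, Finset.mem_univ i, ?_⟩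
      refine Finset.sum_pos' (fun v _ => hAnn i v) ⟨l, Finset.mem_univ l, ?_⟩
      rw [h1]; norm_num
    linarith
  -- quotient inequality
  have hfac : 0 ≤ (degR A i - degR A j) * (degR A k - degR A l) :=
    mul_nonneg (by have := hmono hij.le; linarith) (by have := hmono hkl.le; linarith)
  have hZle : zagreb2R A ≤ zagreb2R A' := by linarith
  unfold Z2
  apply Real.sqrt_le_sqrt
  rw [hedge]
  exact (div_le_div_iff_of_pos_right hpos).mpr hZle
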